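/- Let T be an AP_b-hypercyclic continuous linear operator on a separable Fréchet space X. Then for every natural number p ≥ 1 the operator T^p is AP_b-hypercyclic; moreover, every AP_b-hypercyclic vector of T is an AP_b-hypercyclic vector of T^p. -/

import Mathlib

set_option linter.unusedSectionVars false

/-- A set `A ⊆ ℕ` belongs to the family `AP_b` if it contains arbitrarily long
arithmetic progressions with some fixed common difference `k ≥ 1`. -/
def APb (A : Set ℕ) : Prop :=
  ∃ k : ℕ, 1 ≤ k ∧ ∀ m : ℕ, ∃ a : ℕ, ∀ j : ℕ, j ≤ m → a + j * k ∈ A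

section Aux

variable {X : Type*} [AddCommGroup X] [Module ℝ X] [UniformSpace X] [IsUniformAddGroup X]
  [ContinuousSMul ℝ X] [LocallyConvexSpace ℝ X]

/-- If a continuous linear operator does not have dense range, there is a nonzero
continuous functional vanishing on its range. -/
lemma exists_dual_annihilator {S : X →L[ℝ] X} (h : ¬ DenseRange S) :
    ∃ f : X →L[ℝ] ℝ, (∃ w, f w ≠ 0) ∧ ∀ z, f (S z) = 0 := by
  set Y : Submodule ℝ X := LinearMap.range (S : X →ₗ[ℝ] X) with hY
  have hYd : ¬ Dense (Y : Set X) := by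
    intro hd
    exact h (by simpa [Y, LinearMap.coe_range, DenseRange] using hd)
  set C := Y.topologicalClosure with hC
  have hCc : (C : Set X) = closure (Y : Set X) := rfl
  have : ¬ ∀ v : X, v ∈ (C : Set X) := by
    intro hall
    apply hYd
    rw [dense_iff_closure_eq]
    apply Set.eq_univ_of_forall
    intro v; rw [← hCc]; exact hall v
  push_neg at this
  obtain ⟨v, hv⟩ := this
  obtain ⟨f, u, hfu, hub⟩ :=
    geometric_hahn_banach_point_closed (C.convex) (Submodule.isClosed_topologicalClosure Y) hv
  have h0 : ∀ y ∈ (C : Set X), f y = 0 := by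
    intro y hy
    by_contra hne
    have h1 : u < f (((u - 1) / f y) • y) := hub _ (C.smul_mem _ hy)
    rw [map_smul, smul_eq_mul, div_mul_cancel₀ _ hne] at h1
    linarith
  have hu0 : u < 0 := by
    have := hub 0 (C.zero_mem)
    simpa using this
  refine ⟨f, ⟨v, by intro h'; rw [h'] at hfu; linarith⟩, ?_⟩
  intro z
  exact h0 _ (Submodule.le_topologicalClosure Y ⟨z, rfl⟩)

variable (T : X →L[ℝ] X) {x : X}

/-- A geometric sequence is not dense in ℝ. -/
lemma not_dense_geometric (a s : ℝ) : ¬ Dense (Set.range fun n : ℕ => a ^ n * s) := by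
  intro hd
  rcases le_or_gt |a| 1 with ha | ha
  · obtain ⟨y, ⟨n, rfl⟩, hy⟩ := hd.exists_mem_open isOpen_Ioo
      (⟨|s| + 3/2, by constructor <;> linarith [abs_nonneg s]⟩ :
        (Set.Ioo (|s| + 1) (|s| + 2)).Nonempty)
    simp only [Set.mem_Ioo] at hy
    have : |a ^ n * s| ≤ |s| := by
      rw [abs_mul, abs_pow]
      calc |a| ^ n * |s| ≤ 1 * |s| := by
            apply mul_le_mul_of_nonneg_right (pow_le_one₀ (abs_nonneg a) ha) (abs_nonneg s)
        _ = |s| := one_mul _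
    have h2 := le_abs_self (a ^ n * s)
    exact absurd hy.1 (by linarith)
  · by_cases hs : s = 0
    · obtain ⟨y, ⟨n, rfl⟩, hy⟩ := hd.exists_mem_open isOpen_Ioo
        (⟨3/2, by norm_num⟩ : (Set.Ioo (1:ℝ) 2).Nonempty)
      simp only [hs, mul_zero, Set.mem_Ioo] at hy
      exact absurd hy.1 (by norm_num)
    · obtain ⟨y, ⟨n, rfl⟩, hy⟩ := hd.exists_mem_open isOpen_Ioo
        (⟨0, by constructor <;> [linarith [abs_pos.2 hs]; linarith [abs_pos.2 hs]]⟩ :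
          (Set.Ioo (-(|s|/2)) (|s|/2)).Nonempty)
      simp only [Set.mem_Ioo] at hy
      have h1 : |s| ≤ |a ^ n * s| := by
        rw [abs_mul, abs_pow]
        nlinarith [one_le_pow₀ (le_of_lt ha) (n := n), abs_pos.2 hs]
      have h2 : |a ^ n * s| < |s| / 2 := by
        rw [abs_lt]; constructor <;> [linarith [hy.1]; linarith [hy.2]]
      linarith [abs_pos.2 hs]

lemma dr_linear (hx : Dense (Set.range fun n : ℕ => (T ^ n) x)) (a : ℝ) :
    DenseRange ⇑(T - a • (1 : X →L[ℝ] X)) := by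
  by_contra h
  obtain ⟨f, ⟨w, hw⟩, hf⟩ := exists_dual_annihilator h
  have key : ∀ z, f (T z) = a * f z := by
    intro z
    have := hf z
    simp only [ContinuousLinearMap.sub_apply, ContinuousLinearMap.smul_apply,
      ContinuousLinearMap.one_apply, map_sub, map_smul, smul_eq_mul] at this
    linarith
  have horb : ∀ n : ℕ, f ((T ^ n) x) = a ^ n * f x := by
    intro n
    induction n with
    | zero => simp
    | succ n ih =>
        have h1 : (T ^ (n + 1)) x = T ((T ^ n) x) := by
          rw [pow_succ']; rfl
        rw [h1, key, ih, pow_succ']; ring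
  have hdr : DenseRange ⇑f := by
    apply Function.Surjective.denseRange
    intro r
    exact ⟨(r / f w) • w, by rw [map_smul, smul_eq_mul, div_mul_cancel₀ _ hw]⟩
  have hd2 : Dense (Set.range fun n : ℕ => a ^ n * f x) := by
    have h1 := hdr.dense_image f.continuous hx
    rw [← Set.range_comp] at h1
    convert h1 using 2
    funext n
    exact (horb n).symm
  exact not_dense_geometric a (f x) hd2


lemma dr_quad (hx : Dense (Set.range fun n : ℕ => (T ^ n) x)) (b c : ℝ)
    (hdisc : b ^ 2 < 4 * c) :
    DenseRange ⇑(T * T + b • T + c • (1 : X →L[ℝ] X)) := by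
  by_contra h
  obtain ⟨f, ⟨w0, hw0⟩, hf⟩ := exists_dual_annihilator h
  have key : ∀ z, f (T (T z)) = -(b * f (T z)) - c * f z := by
    intro z
    have := hf z
    simp only [ContinuousLinearMap.add_apply, ContinuousLinearMap.mul_apply,
      ContinuousLinearMap.smul_apply, ContinuousLinearMap.one_apply, map_add, map_smul,
      smul_eq_mul] at this
    linarith
  have hc0 : 0 < c := by nlinarith [sq_nonneg b]
  by_cases hdep : ∃ t : ℝ, ∀ z, f (T z) = t * f z
  · obtain ⟨t, ht⟩ := hdep
    have h2 := key w0
    rw [ht (T w0), ht w0] at h2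
    have h3 : (t ^ 2 + b * t + c) * f w0 = 0 := by linear_combination h2
    have h4 : t ^ 2 + b * t + c = 0 := by
      rcases mul_eq_zero.1 h3 with h' | h'
      · exact h'
      · exact absurd h' hw0
    nlinarith [sq_nonneg (t + b / 2)]
  · push_neg at hdep
    obtain ⟨z0, hz0⟩ := hdep (f (T w0) / f w0)
    have hdet : f w0 * f (T z0) - f z0 * f (T w0) ≠ 0 := by
      intro hc
      apply hz0
      field_simp
      linarith [hc]
    set D := f w0 * f (T z0) - f z0 * f (T w0) with hD
    have hsurj : Function.Surjective (fun z => ((f z, f (T z)) : ℝ × ℝ)) := by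
      rintro ⟨α, β⟩
      refine ⟨((α * f (T z0) - β * f z0) / D) • w0 + ((β * f w0 - α * f (T w0)) / D) • z0, ?_⟩
      have e1 : f (((α * f (T z0) - β * f z0) / D) • w0 + ((β * f w0 - α * f (T w0)) / D) • z0)
          = α := by
        rw [map_add, map_smul, map_smul, smul_eq_mul, smul_eq_mul]
        field_simp
        ring
      have e2 : f (T (((α * f (T z0) - β * f z0) / D) • w0
          + ((β * f w0 - α * f (T w0)) / D) • z0)) = β := by
        rw [map_add, map_smul, map_smul, map_add, map_smul, map_smul, smul_eq_mul, smul_eq_mul]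
        field_simp
        ring
      exact Prod.ext e1 e2
    have hcont : Continuous (fun z => ((f z, f (T z)) : ℝ × ℝ)) :=
      f.continuous.prodMk (f.continuous.comp T.continuous)
    have hdense2 : Dense (Set.range fun n : ℕ => ((f ((T ^ n) x), f (T ((T ^ n) x))) : ℝ × ℝ)) := by
      have h1 := (hsurj.denseRange).dense_image hcont hx
      rw [← Set.range_comp] at h1
      exact h1
    set Q : ℝ × ℝ → ℝ := fun v => c * v.1 ^ 2 + b * v.1 * v.2 + v.2 ^ 2 with hQ
    have hQcont : Continuous Q := by fun_prop
    have hstep : ∀ z, Q (f (T z), f (T (T z))) = c * Q (f z, f (T z)) := by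
      intro z
      simp only [hQ]
      rw [key z]
      ring
    have hQn : ∀ n : ℕ, Q (f ((T ^ n) x), f (T ((T ^ n) x))) = c ^ n * Q (f x, f (T x)) := by
      intro n
      induction n with
      | zero => simp
      | succ n ih =>
          have h1 : (T ^ (n + 1)) x = T ((T ^ n) x) := by rw [pow_succ']; rfl
          rw [h1, hstep ((T ^ n) x), ih, pow_succ]
          ring
    set q0 := Q (f x, f (T x)) with hq0def
    have hq0 : 0 ≤ q0 := by
      rw [hq0def, hQ]
      dsimp only
      nlinarith [sq_nonneg (2 * f (T x) + b * f x), sq_nonneg (f x)]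
    have hmemcl : ∀ r : ℝ, 0 ≤ r → r ∈ closure (Set.range fun n : ℕ => c ^ n * q0) := by
      intro r hr
      have h1 : ((0 : ℝ), Real.sqrt r) ∈
          closure (Set.range fun n : ℕ => ((f ((T ^ n) x), f (T ((T ^ n) x))) : ℝ × ℝ)) :=
        hdense2 _
      have h2 : Q (0, Real.sqrt r) ∈
          closure (Q '' (Set.range fun n : ℕ => ((f ((T ^ n) x), f (T ((T ^ n) x))) : ℝ × ℝ))) :=
        (image_closure_subset_closure_image hQcont) (Set.mem_image_of_mem Q h1)
      have h3 : Q (0, Real.sqrt r) = r := by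
        rw [hQ]; simp [Real.sq_sqrt hr]
      have h4 : Q '' (Set.range fun n : ℕ => ((f ((T ^ n) x), f (T ((T ^ n) x))) : ℝ × ℝ))
          = Set.range fun n : ℕ => c ^ n * q0 := by
        rw [← Set.range_comp]
        exact congrArg Set.range (funext fun n : ℕ => hQn n)
      rw [h3, h4] at h2
      exact h2
    clear_value q0
    -- contradiction
    rcases le_or_gt c 1 with h1 | h1
    · have := hmemcl (q0 + 1) (by linarith)
      rw [Metric.mem_closure_iff] at this
      obtain ⟨v, ⟨n, rfl⟩, hv⟩ := this ((1:ℝ)/2) (by norm_num)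
      have hb1 : c ^ n * q0 ≤ q0 := by
        nlinarith [pow_le_one₀ (le_of_lt hc0) h1 (n := n)]
      rw [Real.dist_eq, abs_lt] at hv
      simp only at hv
      linarith [hv.1, hv.2]
    · by_cases hq00 : q0 = 0
      · have := hmemcl 1 (by norm_num)
        rw [Metric.mem_closure_iff] at this
        obtain ⟨v, ⟨n, rfl⟩, hv⟩ := this ((1:ℝ)/2) (by norm_num)
        rw [Real.dist_eq, abs_lt] at hv
        simp only [hq00, mul_zero] at hv
        linarith [hv.1, hv.2]
      · have hq0pos : 0 < q0 := lt_of_le_of_ne hq0 (Ne.symm hq00)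
        have := hmemcl (q0 / 2) (by linarith)
        rw [Metric.mem_closure_iff] at this
        obtain ⟨v, ⟨n, rfl⟩, hv⟩ := this (q0 / 4) (by linarith)
        have hb1 : q0 ≤ c ^ n * q0 := by
          nlinarith [one_le_pow₀ (le_of_lt h1) (n := n)]
        rw [Real.dist_eq, abs_lt] at hv
        simp only at hv
        linarith [hv.1, hv.2]

lemma dr_poly (hx : Dense (Set.range fun n : ℕ => (T ^ n) x)) :
    ∀ q : Polynomial ℝ, q ≠ 0 → DenseRange ⇑(Polynomial.aeval T q) := by
  have main : ∀ d : ℕ, ∀ q : Polynomial ℝ, q ≠ 0 → q.natDegree ≤ d →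
      DenseRange ⇑(Polynomial.aeval T q) := by
    intro d
    induction d with
    | zero =>
        intro q hq hdeg
        obtain ⟨a, rfl⟩ : ∃ a : ℝ, Polynomial.C a = q :=
          ⟨q.coeff 0, (Polynomial.eq_C_of_natDegree_eq_zero (Nat.le_zero.1 hdeg)).symm⟩
        have ha : a ≠ 0 := fun h => hq (by rw [h, map_zero])
        have : ⇑(Polynomial.aeval T (Polynomial.C a)) = fun z : X => a • z := by
          funext z
          rw [Polynomial.aeval_C]
          exact ContinuousLinearMap.algebraMap_apply a z
        rw [this]
        apply Function.Surjective.denseRange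
        intro y
        exact ⟨a⁻¹ • y, by show a • a⁻¹ • y = y; rw [smul_smul, mul_inv_cancel₀ ha, one_smul]⟩
    | succ d ih =>
        intro q hq hdeg
        by_cases hle : q.natDegree ≤ d
        · exact ih q hq hle
        have hdegpos : 0 < q.natDegree := by omega
        -- complex root
        have hqc : (q.map (algebraMap ℝ ℂ)).degree ≠ 0 := by
          rw [Polynomial.degree_map]
          rw [Polynomial.degree_eq_natDegree hq]
          simp only [ne_eq, Nat.cast_eq_zero]
          omega
        obtain ⟨z, hz⟩ := Complex.exists_root (by
          rcases lt_or_ge 0 (q.map (algebraMap ℝ ℂ)).degree with h | h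
          · exact h
          · exact absurd (le_antisymm h (by
              rw [Polynomial.degree_map, Polynomial.degree_eq_natDegree hq]
              exact_mod_cast Nat.zero_le _)) hqc)
        have hroot : Polynomial.aeval z q = 0 := by
          rw [Polynomial.aeval_def, Polynomial.eval₂_eq_eval_map]
          exact hz
        have hint : IsIntegral ℝ z := (IsAlgebraic.isIntegral ⟨q, hq, hroot⟩)
        have hrdvd : minpoly ℝ z ∣ q := minpoly.dvd ℝ z hroot
        have hrmonic : (minpoly ℝ z).Monic := minpoly.monic hint
        have hr1 : 0 < (minpoly ℝ z).natDegree := minpoly.natDegree_pos hint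
        have hr2 : (minpoly ℝ z).natDegree ≤ 2 :=
          (minpoly.natDegree_le z).trans (le_of_eq Complex.finrank_real_complex)
        obtain ⟨s, hqs⟩ := hrdvd
        have hr0 : minpoly ℝ z ≠ 0 := hrmonic.ne_zero
        have hs : s ≠ 0 := by
          intro h
          rw [h, mul_zero] at hqs
          exact hq hqs
        have hdegs : s.natDegree ≤ d := by
          have := Polynomial.natDegree_mul hr0 hs
          rw [← hqs] at this
          omega
        have DRs := ih s hs hdegs
        set r := minpoly ℝ z with hrdef
        have DRr : DenseRange ⇑(Polynomial.aeval T r) := by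
          interval_cases hnr : r.natDegree
          · -- degree 1
            have hrepr := hrmonic.eq_X_add_C hnr
            have hco : ⇑(Polynomial.aeval T r) = ⇑(T - (-(r.coeff 0)) • (1 : X →L[ℝ] X)) := by
              conv_lhs => rw [hrepr]
              simp only [map_add, Polynomial.aeval_X, Polynomial.aeval_C, neg_smul,
                sub_neg_eq_add]
              rw [Algebra.algebraMap_eq_smul_one]
            rw [hco]
            exact dr_linear T hx _
          · -- degree 2
            have hc2 : r.coeff 2 = 1 := by
              have := hrmonic.coeff_natDegree
              rwa [hnr] at this
            have hrepr : r = Polynomial.X ^ 2 + Polynomial.C (r.coeff 1) * Polynomial.X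
                + Polynomial.C (r.coeff 0) := by
              ext n
              rcases n with _ | _ | _ | n
              · simp
              · simp
              · simp [hc2]
              · have h3 : r.coeff (n + 3) = 0 :=
                  Polynomial.coeff_eq_zero_of_natDegree_lt (by omega)
                simp [h3, Polynomial.coeff_X_pow]
            have hdisc : (r.coeff 1) ^ 2 < 4 * r.coeff 0 := by
              by_contra hge
              push_neg at hge
              set a : ℝ := (-(r.coeff 1) + Real.sqrt ((r.coeff 1) ^ 2 - 4 * r.coeff 0)) / 2
                with hadef
              have hroot2 : r.IsRoot a := by
                have hsq : Real.sqrt ((r.coeff 1) ^ 2 - 4 * r.coeff 0)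
                    ^ 2 = (r.coeff 1) ^ 2 - 4 * r.coeff 0 :=
                  Real.sq_sqrt (by linarith)
                rw [hrepr]
                simp only [Polynomial.IsRoot, Polynomial.eval_add, Polynomial.eval_pow,
                  Polynomial.eval_mul, Polynomial.eval_X, Polynomial.eval_C]
                rw [hadef]
                nlinarith [hsq]
              obtain ⟨u, hu⟩ := (Polynomial.dvd_iff_isRoot.2 hroot2)
              have hXa : (Polynomial.X - Polynomial.C a).natDegree = 1 :=
                Polynomial.natDegree_X_sub_C a
              have hu0 : u ≠ 0 := by
                intro h
                rw [h, mul_zero] at hu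
                exact hr0 hu
              have hud : u.natDegree = 1 := by
                have hXa0 : (Polynomial.X - Polynomial.C a) ≠ 0 := Polynomial.X_sub_C_ne_zero a
                have := Polynomial.natDegree_mul hXa0 hu0
                rw [← hu, hnr, hXa] at this
                omega
              have hirr := minpoly.irreducible hint
              rw [← hrdef] at hirr
              rcases hirr.isUnit_or_isUnit hu with h' | h'
              · exact (Polynomial.X - Polynomial.C a).not_isUnit_of_natDegree_pos
                  (by rw [hXa]; norm_num) h'
              · exact u.not_isUnit_of_natDegree_pos (by rw [hud]; norm_num) h'
            have hco : ⇑(Polynomial.aeval T r)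
                = ⇑(T * T + (r.coeff 1) • T + (r.coeff 0) • (1 : X →L[ℝ] X)) := by
              conv_lhs => rw [hrepr]
              simp only [map_add, map_mul, map_pow, Polynomial.aeval_X, Polynomial.aeval_C]
              rw [pow_two, ← Algebra.smul_def, Algebra.algebraMap_eq_smul_one]
            rw [hco]
            exact dr_quad T hx _ _ hdisc
        -- combine
        have hcomp : ⇑(Polynomial.aeval T q) = ⇑(Polynomial.aeval T r) ∘ ⇑(Polynomial.aeval T s) := by
          rw [hqs, map_mul]
          funext w
          rw [ContinuousLinearMap.mul_apply]
          rfl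
        rw [hcomp]
        exact DenseRange.comp DRr DRs (Polynomial.aeval T r).continuous
  intro q hq
  exact main q.natDegree q hq le_rfl


lemma aeval_comm_pow (q : Polynomial ℝ) (n : ℕ) (z : X) :
    (T ^ n) ((Polynomial.aeval T q) z) = (Polynomial.aeval T q) ((T ^ n) z) := by
  have h : T ^ n * Polynomial.aeval T q = Polynomial.aeval T q * T ^ n := by
    have h1 : Polynomial.aeval T (Polynomial.X ^ n * q) = Polynomial.aeval T (q * Polynomial.X ^ n) := by
      rw [mul_comm]
    rw [map_mul, map_mul, map_pow, Polynomial.aeval_X] at h1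
    exact h1
  calc (T ^ n) ((Polynomial.aeval T q) z) = (T ^ n * Polynomial.aeval T q) z := rfl
    _ = (Polynomial.aeval T q * T ^ n) z := by rw [h]
    _ = (Polynomial.aeval T q) ((T ^ n) z) := rfl

lemma orbit_dense_of_poly (hx : Dense (Set.range fun n : ℕ => (T ^ n) x))
    {q : Polynomial ℝ} (hq : q ≠ 0) :
    Dense (Set.range fun n : ℕ => (T ^ n) ((Polynomial.aeval T q) x)) := by
  have h1 := (dr_poly T hx q hq).dense_image (Polynomial.aeval T q).continuous hx
  rw [← Set.range_comp] at h1
  convert h1 using 2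
  funext n
  exact aeval_comm_pow T q n x

lemma preconnM :
    IsPreconnected {z : X | ∃ q : Polynomial ℝ, q ≠ 0 ∧ (Polynomial.aeval T q) x = z} := by
  apply isPreconnected_of_forall x
  rintro y ⟨q, hq, rfl⟩
  set d := q.natDegree with hd
  set w : X := (T ^ (d + 1)) x with hw
  have hwM : ∀ z : X, z ∈ segment ℝ x w ∪ segment ℝ w ((Polynomial.aeval T q) x) →
      ∃ q' : Polynomial ℝ, q' ≠ 0 ∧ (Polynomial.aeval T q') x = z := by
    rintro z (hz | hz)
    · obtain ⟨a, b, ha, hb, hab, rfl⟩ := hz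
      refine ⟨Polynomial.C a + Polynomial.C b * Polynomial.X ^ (d + 1), ?_, ?_⟩
      · by_cases hb0 : b = 0
        · have ha1 : a = 1 := by rw [hb0] at hab; linarith
          rw [hb0, ha1]
          simp
        · intro hcon
          apply hb0
          have := congrArg (fun p : Polynomial ℝ => p.coeff (d + 1)) hcon
          simpa [Polynomial.coeff_X_pow] using this
      · simp only [map_add, map_mul, map_pow, Polynomial.aeval_X, Polynomial.aeval_C]
        rw [ContinuousLinearMap.add_apply, ContinuousLinearMap.mul_apply]
        rw [Algebra.algebraMap_eq_smul_one, Algebra.algebraMap_eq_smul_one]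
        simp [hw]
    · obtain ⟨a, b, ha, hb, hab, rfl⟩ := hz
      refine ⟨Polynomial.C a * Polynomial.X ^ (d + 1) + Polynomial.C b * q, ?_, ?_⟩
      · by_cases ha0 : a = 0
        · have hb1 : b = 1 := by rw [ha0] at hab; linarith
          rw [ha0, hb1]
          simpa using hq
        · intro hcon
          apply ha0
          have := congrArg (fun p : Polynomial ℝ => p.coeff (d + 1)) hcon
          have hqc : q.coeff (d + 1) = 0 :=
            Polynomial.coeff_eq_zero_of_natDegree_lt (by omega)
          simpa [Polynomial.coeff_X_pow, hqc] using this
      · simp only [map_add, map_mul, map_pow, Polynomial.aeval_X, Polynomial.aeval_C]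
        rw [ContinuousLinearMap.add_apply, ContinuousLinearMap.mul_apply,
          ContinuousLinearMap.mul_apply]
        rw [Algebra.algebraMap_eq_smul_one, Algebra.algebraMap_eq_smul_one]
        simp [hw]
  refine ⟨segment ℝ x w ∪ segment ℝ w ((Polynomial.aeval T q) x), hwM, ?_, ?_, ?_⟩
  · exact Set.mem_union_left _ (left_mem_segment ℝ x w)
  · exact Set.mem_union_right _ (right_mem_segment ℝ w _)
  · exact IsPreconnected.union w (right_mem_segment ℝ x w) (left_mem_segment ℝ w _)
      (convex_segment x w).isPreconnected (convex_segment w _).isPreconnected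


/-- Ansari's theorem: a vector with dense `T`-orbit has dense `T^p`-orbit. -/
lemma ansari (p : ℕ) (hp : 1 ≤ p) (hx : Dense (Set.range fun n : ℕ => (T ^ n) x)) :
    Dense (Set.range fun n : ℕ => ((T ^ p) ^ n) x) := by
  haveI : NeZero p := ⟨by omega⟩
  set orb : X → ZMod p → Set X :=
    fun z r => {y | ∃ n : ℕ, (n : ZMod p) = r ∧ (T ^ n) z = y} with horb
  set E : ZMod p → Set X := fun r => closure (orb x r) with hE
  -- mapping property
  have hmapsTo : ∀ (z w : X) (r : ZMod p) (i : ℕ),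
      w ∈ closure (orb z r) → (T ^ i) w ∈ closure (orb z (r + i)) := by
    intro z w r i hw
    have hm : Set.MapsTo (⇑(T ^ i)) (orb z r) (orb z (r + i)) := by
      rintro _ ⟨n, hn, rfl⟩
      refine ⟨i + n, by push_cast [hn]; ring, ?_⟩
      rw [pow_add, ContinuousLinearMap.mul_apply]
    exact (hm.closure (T ^ i).continuous) hw
  -- covering property
  have hcover : ∀ z : X, Dense (Set.range fun n : ℕ => (T ^ n) z) →
      ∀ w : X, ∃ t : ZMod p, w ∈ closure (orb z t) := by
    intro z hz w
    by_contra hcon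
    push_neg at hcon
    have hU : IsClosed (⋃ t : ZMod p, closure (orb z t)) :=
      isClosed_iUnion_of_finite fun t => isClosed_closure
    have hsub : Set.range (fun n : ℕ => (T ^ n) z) ⊆ ⋃ t : ZMod p, closure (orb z t) := by
      rintro _ ⟨n, rfl⟩
      exact Set.mem_iUnion.2 ⟨(n : ZMod p), subset_closure ⟨n, rfl, rfl⟩⟩
    have hdense : Dense (⋃ t : ZMod p, closure (orb z t)) := hz.mono hsub
    have huniv : (⋃ t : ZMod p, closure (orb z t)) = Set.univ := by
      rw [← hU.closure_eq]
      exact hdense.closure_eq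
    have : w ∈ ⋃ t : ZMod p, closure (orb z t) := huniv ▸ Set.mem_univ w
    obtain ⟨t, ht⟩ := Set.mem_iUnion.1 this
    exact hcon t ht
  -- J
  set J : Set (ZMod p) := {r | x ∈ E r} with hJ
  have hJ0 : (0 : ZMod p) ∈ J := by
    apply subset_closure
    exact ⟨0, by push_cast; ring, by simp⟩
  have hshift : ∀ r ∈ J, ∀ s, E s ⊆ E (r + s) := by
    intro r hr s
    apply closure_minimal ?_ isClosed_closure
    rintro _ ⟨n, hn, rfl⟩
    have := hmapsTo x x r n hr
    rwa [hn] at this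
  have hJadd : ∀ r ∈ J, ∀ s ∈ J, r + s ∈ J := fun r hr s hs => hshift r hr s hs
  have hJnsmul : ∀ (m : ℕ), ∀ r ∈ J, (m • r) ∈ J := by
    intro m
    induction m with
    | zero => intro r _; rw [zero_smul]; exact hJ0
    | succ m ih =>
        intro r hr
        rw [succ_nsmul]
        exact hJadd _ (ih r hr) _ hr
  have hJneg : ∀ r ∈ J, -r ∈ J := by
    intro r hr
    have h1 := hJnsmul (p - 1) r hr
    have h2 : ((p - 1 : ℕ) • r) = -r := by
      have hp0 : ((p : ℕ) : ZMod p) = 0 := ZMod.natCast_self p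
      have : ((p - 1 : ℕ) : ZMod p) = -1 := by
        have : (p - 1) + 1 = p := by omega
        have h3 : (((p - 1) + 1 : ℕ) : ZMod p) = 0 := by rw [this, hp0]
        push_cast at h3
        linear_combination h3
      rw [nsmul_eq_mul, this]
      ring
    rwa [h2] at h1
  -- claim
  have hclaim : ∀ z : X, Dense (Set.range fun n : ℕ => (T ^ n) z) → ∀ r s : ZMod p,
      z ∈ E r → z ∈ E s → ∃ t : ZMod p, (r + t) ∈ J ∧ (s + t) ∈ J := by
    intro z hz r s hzr hzs
    obtain ⟨t, hxt⟩ := hcover z hz x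
    have hsub1 : closure (orb z t) ⊆ E (r + t) := by
      apply closure_minimal ?_ isClosed_closure
      rintro _ ⟨n, hn, rfl⟩
      have := hmapsTo x z r n hzr
      rwa [hn] at this
    have hsub2 : closure (orb z t) ⊆ E (s + t) := by
      apply closure_minimal ?_ isClosed_closure
      rintro _ ⟨n, hn, rfl⟩
      have := hmapsTo x z s n hzs
      rwa [hn] at this
    exact ⟨t, hsub1 hxt, hsub2 hxt⟩
  -- J = univ
  have hJuniv : ∀ s : ZMod p, s ∈ J := by
    by_contra hcon
    push_neg at hcon
    obtain ⟨s0, hs0⟩ := hcon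
    set M : Set X := {z | ∃ q : Polynomial ℝ, q ≠ 0 ∧ (Polynomial.aeval T q) x = z} with hM
    have hMorbit : ∀ z ∈ M, Dense (Set.range fun n : ℕ => (T ^ n) z) := by
      rintro z ⟨q, hq, rfl⟩
      exact orbit_dense_of_poly T hx hq
    have hxM : x ∈ M := ⟨1, one_ne_zero, by simp⟩
    have hpowM : ∀ n : ℕ, (T ^ n) x ∈ M := by
      intro n
      exact ⟨Polynomial.X ^ n, pow_ne_zero _ Polynomial.X_ne_zero, by
        rw [map_pow, Polynomial.aeval_X]⟩
    set A : Set X := ⋃ r ∈ J, E r with hA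
    set B : Set X := ⋃ r ∈ {r : ZMod p | r ∉ J}, E r with hB
    have hAclosed : IsClosed A :=
      (Set.toFinite J).isClosed_biUnion fun r _ => isClosed_closure
    have hBclosed : IsClosed B :=
      (Set.toFinite _).isClosed_biUnion fun r _ => isClosed_closure
    have hMcover : M ⊆ A ∪ B := by
      intro z _
      obtain ⟨t, ht⟩ := hcover x hx z
      by_cases htJ : t ∈ J
      · exact Or.inl (Set.mem_biUnion htJ ht)
      · exact Or.inr (Set.mem_biUnion htJ ht)
    have hxA : x ∈ A := Set.mem_biUnion hJ0 hJ0
    have hyB : (T ^ (s0.val)) x ∈ B := by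
      apply Set.mem_biUnion (show s0 ∈ {r : ZMod p | r ∉ J} from hs0)
      apply subset_closure
      exact ⟨s0.val, ZMod.natCast_rightInverse s0, rfl⟩
    obtain ⟨z, hzM, hzA, hzB⟩ := isPreconnected_closed_iff.1 (preconnM (x := x) T) A B hAclosed
      hBclosed hMcover ⟨x, hxM, hxA⟩ ⟨(T ^ (s0.val)) x, hpowM _, hyB⟩
    obtain ⟨r, hrJ, hzr⟩ := Set.mem_iUnion₂.1 hzA
    obtain ⟨s, hsJ, hzs⟩ := Set.mem_iUnion₂.1 hzB
    obtain ⟨t, h1, h2⟩ := hclaim z (hMorbit z hzM) r s hzr hzs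
    apply hsJ
    have h3 : -(r + t) ∈ J := hJneg _ h1
    have h4 : (s + t) + -(r + t) ∈ J := hJadd _ h2 _ h3
    have h5 : ((s + t) + -(r + t)) + r ∈ J := hJadd _ h4 _ hrJ
    have : ((s + t) + -(r + t)) + r = s := by ring
    rwa [this] at h5
  -- conclude
  have hE0 : ∀ w : X, w ∈ E 0 := by
    intro w
    obtain ⟨t, ht⟩ := hcover x hx w
    have := hshift (-t) (hJuniv (-t)) t ht
    rwa [neg_add_cancel] at this
  intro w
  have hw := hE0 w
  have hsub : orb x 0 ⊆ Set.range fun n : ℕ => ((T ^ p) ^ n) x := by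
    rintro _ ⟨n, hn, rfl⟩
    obtain ⟨m, rfl⟩ : p ∣ n := (ZMod.natCast_eq_zero_iff n p).1 hn
    exact ⟨m, by show ((T ^ p) ^ m) x = (T ^ (p * m)) x; rw [← pow_mul]⟩
  exact closure_mono hsub hw


lemma apb_power (T : X →L[ℝ] X) (x : X) (p : ℕ) (hp : 1 ≤ p)
    (hx : ∀ U : Set X, IsOpen U → U.Nonempty → APb {n : ℕ | (T ^ n) x ∈ U}) :
    ∀ U : Set X, IsOpen U → U.Nonempty → APb {n : ℕ | ((T ^ p) ^ n) x ∈ U} := by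
  have hdense : Dense (Set.range fun n : ℕ => (T ^ n) x) := by
    rw [dense_iff_inter_open]
    intro U hU hUne
    obtain ⟨k, hk, hspec⟩ := hx U hU hUne
    obtain ⟨a, ha⟩ := hspec 0
    have h0 := ha 0 (le_refl 0)
    simp only [Set.mem_setOf_eq, Nat.zero_mul, Nat.add_zero] at h0
    exact ⟨(T ^ a) x, h0, ⟨a, rfl⟩⟩
  have hD2 := ansari T p hp hdense
  intro U hU hUne
  obtain ⟨k, hk1, hspec⟩ := hx U hU hUne
  refine ⟨k, hk1, ?_⟩
  intro m
  set V : Set X := ⋂ j ∈ Finset.range (m + 1), (⇑(T ^ (p * k * j)))⁻¹' U with hV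
  have hVopen : IsOpen V :=
    isOpen_biInter_finset fun j _ => hU.preimage (T ^ (p * k * j)).continuous
  have hVne : V.Nonempty := by
    obtain ⟨a, ha⟩ := hspec (p * m)
    refine ⟨(T ^ a) x, ?_⟩
    rw [hV]
    apply Set.mem_iInter₂.2
    intro j hj
    have hj' : j ≤ m := by
      have := Finset.mem_range.1 hj
      omega
    have hmem := ha (p * j) (Nat.mul_le_mul_left p hj')
    show (T ^ (p * k * j)) ((T ^ a) x) ∈ U
    have he : (T ^ (p * k * j)) ((T ^ a) x) = (T ^ (a + p * j * k)) x := by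
      rw [← ContinuousLinearMap.mul_apply, ← pow_add]
      congr 2
      ring
    rw [he]
    exact hmem
  obtain ⟨y, ⟨n, rfl⟩, hyV⟩ := hD2.exists_mem_open hVopen hVne
  refine ⟨n, ?_⟩
  intro j hj
  show ((T ^ p) ^ (n + j * k)) x ∈ U
  have e1 : ((T ^ p) ^ (n + j * k)) x = (T ^ (p * k * j)) (((T ^ p) ^ n) x) := by
    calc ((T ^ p) ^ (n + j * k)) x = (T ^ (p * (n + j * k))) x := by rw [pow_mul]
      _ = (T ^ (p * k * j + p * n)) x := by congr 2; ring
      _ = (T ^ (p * k * j)) ((T ^ (p * n)) x) := by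
          rw [pow_add, ContinuousLinearMap.mul_apply]
      _ = (T ^ (p * k * j)) (((T ^ p) ^ n) x) := by congr 1; rw [pow_mul]
  rw [e1]
  have := Set.mem_iInter₂.1 (hV ▸ hyV) j (Finset.mem_range.2 (by omega))
  exact this


end Aux

/-- **Ansari-type property.** -/
theorem APb_hypercyclic_powers
    {X : Type*} [AddCommGroup X] [Module ℝ X] [UniformSpace X] [IsUniformAddGroup X]
    [ContinuousSMul ℝ X] [LocallyConvexSpace ℝ X] [CompleteSpace X]
    [Filter.IsCountablyGenerated (uniformity X)] [T2Space X]
    [TopologicalSpace.SeparableSpace X]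
    (T : X →L[ℝ] X)
    (hAPb : ∃ x : X, ∀ U : Set X, IsOpen U → U.Nonempty → APb {n : ℕ | (T ^ n) x ∈ U})
    (p : ℕ) (hp : 1 ≤ p) :
    (∃ x : X, ∀ U : Set X, IsOpen U → U.Nonempty →
      APb {n : ℕ | ((T ^ p) ^ n) x ∈ U}) ∧
    (∀ x : X, (∀ U : Set X, IsOpen U → U.Nonempty → APb {n : ℕ | (T ^ n) x ∈ U}) →
      ∀ U : Set X, IsOpen U → U.Nonempty → APb {n : ℕ | ((T ^ p) ^ n) x ∈ U}) := by
  constructor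
  · obtain ⟨x, hx⟩ := hAPb
    exact ⟨x, apb_power T x p hp hx⟩
  · intro x hx
    exact apb_power T x p hp hx
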